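/- If M is a proper length-factorial monoid (length-factorial but not factorial), then M admits a master factorization relation (w1,w2): an irredundant unbalanced relation such that every irredundant unbalanced factorization relation of M equals (w1^n, w2^n) or (w2^n, w1^n) for some positive integer n; moreover (w1,w2) and (w2,w1) are the only master relations up to this symmetry. -/

import Mathlib

open Multiset

namespace LF

variable (M : Type*) [CancelCommMonoid M]

/-- `s` is a factorization of the element `b` of the reduced monoid `M_red = Associates M`:
a multiset of atoms of `M_red` whose product is `b`. -/
def IsFactorizationOf (s : Multiset (Associates M)) (b : Associates M) : Prop :=
  (∀ a ∈ s, Irreducible a) ∧ s.prod = b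

/-- The set of factorizations of `x : M`. -/
def FactorsOf (x : M) : Set (Multiset (Associates M)) :=
  {s | IsFactorizationOf M s (Associates.mk x)}

/-- `M` is atomic: every non-unit admits a factorization into atoms. -/
def Atomic : Prop := ∀ x : M, ¬ IsUnit x → (FactorsOf M x).Nonempty

/-- `M` is length-factorial: factorizations of the same element with equal length coincide. -/
def LengthFactorial : Prop :=
  ∀ x : M, ∀ s ∈ FactorsOf M x, ∀ t ∈ FactorsOf M x, card s = card t → s = t

/-- `M` is a factorial (unique factorization) monoid: every element has exactly one
factorization. -/
def Factorial : Prop := ∀ x : M, ∃! s, s ∈ FactorsOf M x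

/-- `(z₁, z₂)` is a factorization relation: two multisets of atoms with the same product. -/
def IsRel (z1 z2 : Multiset (Associates M)) : Prop :=
  (∀ a ∈ z1, Irreducible a) ∧ (∀ a ∈ z2, Irreducible a) ∧ z1.prod = z2.prod

/-- A factorization relation is irredundant if the two sides share no atom. -/
def Irredundant (z1 z2 : Multiset (Associates M)) : Prop := ∀ a, a ∈ z1 → a ∉ z2

/-- Prime element of the reduced monoid. -/
def IsPrimeElem (p : Associates M) : Prop :=
  ¬ IsUnit p ∧ ∀ a b : Associates M, p ∣ a * b → p ∣ a ∨ p ∣ b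

/-- A purely long atom: a non-prime atom which, whenever it appears in an irredundant
unbalanced factorization relation, appears in the longer side. -/
def PurelyLong (a : Associates M) : Prop :=
  Irreducible a ∧ ¬ IsPrimeElem M a ∧
    ∀ z1 z2, IsRel M z1 z2 → Irredundant M z1 z2 → card z1 ≠ card z2 →
      a ∈ z1 → card z2 < card z1

/-- A purely short atom: a non-prime atom which, whenever it appears in an irredundant
unbalanced factorization relation, appears in the shorter side. -/
def PurelyShort (a : Associates M) : Prop :=
  Irreducible a ∧ ¬ IsPrimeElem M a ∧
    ∀ z1 z2, IsRel M z1 z2 → Irredundant M z1 z2 → card z1 ≠ card z2 →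
      a ∈ z1 → card z1 < card z2

/-- `(w₁, w₂)` is a master factorization relation: an irredundant unbalanced factorization
relation such that every irredundant unbalanced factorization relation is of the form
`(n • w₁, n • w₂)` or `(n • w₂, n • w₁)` for some positive integer `n`. -/
def IsMasterRel (w1 w2 : Multiset (Associates M)) : Prop :=
  IsRel M w1 w2 ∧ Irredundant M w1 w2 ∧ card w1 ≠ card w2 ∧
    ∀ z1 z2, IsRel M z1 z2 → Irredundant M z1 z2 → card z1 ≠ card z2 →
      ∃ n : ℕ, 0 < n ∧ ((z1 = n • w1 ∧ z2 = n • w2) ∨ (z1 = n • w2 ∧ z2 = n • w1))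
variable {M}

theorem assoc_cancel {a b c : Associates M} (h : a * c = b * c) : a = b := by
  obtain ⟨a, rfl⟩ := Associates.mk_surjective a
  obtain ⟨b, rfl⟩ := Associates.mk_surjective b
  obtain ⟨c, rfl⟩ := Associates.mk_surjective c
  rw [Associates.mk_mul_mk, Associates.mk_mul_mk, Associates.mk_eq_mk_iff_associated] at h
  obtain ⟨u, hu⟩ := h
  rw [Associates.mk_eq_mk_iff_associated]
  refine ⟨u, mul_right_cancel (b := c) ?_⟩
  rw [mul_right_comm]; exact hu

theorem eq_zero_of_prod_eq_one {s : Multiset (Associates M)}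
    (h : ∀ a ∈ s, Irreducible a) (hp : s.prod = 1) : s = 0 := by
  by_contra hs
  obtain ⟨a, ha⟩ := exists_mem_of_ne_zero hs
  obtain ⟨t, rfl⟩ := exists_cons_of_mem ha
  rw [prod_cons] at hp
  exact (h a (mem_cons_self a t)).not_isUnit (IsUnit.of_mul_eq_one _ hp)

theorem lf' (hlf : LengthFactorial M) {s t : Multiset (Associates M)}
    (hs : ∀ a ∈ s, Irreducible a) (ht : ∀ a ∈ t, Irreducible a)
    (hp : s.prod = t.prod) (hc : card s = card t) : s = t := by
  obtain ⟨x, hx⟩ := Associates.mk_surjective s.prod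
  exact hlf x s ⟨hs, hx.symm⟩ t ⟨ht, by rw [← hp, ← hx]⟩ hc

theorem isRel_symm {z1 z2 : Multiset (Associates M)} (h : IsRel M z1 z2) : IsRel M z2 z1 :=
  ⟨h.2.1, h.1, h.2.2.symm⟩

theorem irred_symm {z1 z2 : Multiset (Associates M)} (h : Irredundant M z1 z2) :
    Irredundant M z2 z1 := fun a ha hb => h a hb ha

theorem rel_sides_ne {z1 z2 : Multiset (Associates M)} (h : IsRel M z1 z2)
    (hc : card z1 ≠ card z2) : z1 ≠ 0 ∧ z2 ≠ 0 := by
  constructor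
  · rintro rfl
    have h0 : z2 = 0 := eq_zero_of_prod_eq_one h.2.1 (by rw [← h.2.2]; simp)
    exact hc (by rw [h0])
  · rintro rfl
    have h0 : z1 = 0 := eq_zero_of_prod_eq_one h.1 (by rw [h.2.2]; simp)
    exact hc (by rw [h0])

theorem reduce [DecidableEq (Associates M)] {z1 z2 : Multiset (Associates M)}
    (h : IsRel M z1 z2) :
    IsRel M (z1 - z1 ∩ z2) (z2 - z1 ∩ z2) ∧ Irredundant M (z1 - z1 ∩ z2) (z2 - z1 ∩ z2) := by
  have e1 : (z1 - z1 ∩ z2) + z1 ∩ z2 = z1 := tsub_add_cancel_of_le inter_le_left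
  have e2 : (z2 - z1 ∩ z2) + z1 ∩ z2 = z2 := tsub_add_cancel_of_le inter_le_right
  refine ⟨⟨fun a ha => h.1 a (mem_of_le tsub_le_self ha),
      fun a ha => h.2.1 a (mem_of_le tsub_le_self ha), ?_⟩, ?_⟩
  · apply assoc_cancel (c := (z1 ∩ z2).prod)
    rw [← prod_add, ← prod_add, e1, e2]
    exact h.2.2
  · intro a ha hb
    rw [← count_pos, count_sub, count_inter] at ha hb
    omega

theorem nsmul_cancel {α : Type*} {d : ℕ} (hd : 0 < d) {s t : Multiset α}
    (h : d • s = d • t) : s = t := by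
  classical
  ext a
  rw [Multiset.ext] at h
  have h' := h a
  rw [count_nsmul, count_nsmul] at h'
  exact Nat.eq_of_mul_eq_mul_left hd h'

theorem key (hlf : LengthFactorial M) {z1 z2 w1 w2 : Multiset (Associates M)} (dz dw : ℕ)
    (hz : IsRel M z1 z2) (hw : IsRel M w1 w2)
    (hzi : Irredundant M z1 z2) (hwi : Irredundant M w1 w2)
    (hdz : card z1 + dz = card z2) (hdw : card w1 + dw = card w2)
    (hdz0 : 0 < dz) (hdw0 : 0 < dw) :
    dw • z1 = dz • w1 ∧ dw • z2 = dz • w2 := by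
  classical
  have hXY : dw • z1 + dz • w2 = dw • z2 + dz • w1 := by
    refine lf' hlf ?_ ?_ ?_ ?_
    · intro a ha
      rcases mem_add.1 ha with h | h
      · exact hz.1 a ((mem_nsmul.1 h).2)
      · exact hw.2.1 a ((mem_nsmul.1 h).2)
    · intro a ha
      rcases mem_add.1 ha with h | h
      · exact hz.2.1 a ((mem_nsmul.1 h).2)
      · exact hw.1 a ((mem_nsmul.1 h).2)
    · rw [prod_add, prod_add, prod_nsmul, prod_nsmul, prod_nsmul, prod_nsmul,
        hz.2.2, hw.2.2]
    · simp only [card_add, card_nsmul]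
      rw [← hdz, ← hdw]; ring
  rw [Multiset.ext] at hXY
  have main : ∀ a, dw * count a z1 = dz * count a w1 ∧ dw * count a z2 = dz * count a w2 := by
    intro a
    have h := hXY a
    simp only [count_add, count_nsmul] at h
    have hzd : count a z1 = 0 ∨ count a z2 = 0 := by
      by_cases hm : a ∈ z1
      · exact Or.inr (count_eq_zero.2 (hzi a hm))
      · exact Or.inl (count_eq_zero.2 hm)
    have hwd : count a w1 = 0 ∨ count a w2 = 0 := by
      by_cases hm : a ∈ w1
      · exact Or.inr (count_eq_zero.2 (hwi a hm))
      · exact Or.inl (count_eq_zero.2 hm)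
    rcases hzd with h0 | h0 <;> rcases hwd with h1 | h1 <;>
      rw [h0, h1] at h ⊢ <;> omega
  refine ⟨Multiset.ext.2 fun a => ?_, Multiset.ext.2 fun a => ?_⟩
  · rw [count_nsmul, count_nsmul]; exact (main a).1
  · rw [count_nsmul, count_nsmul]; exact (main a).2

/-- A proper length-factorial monoid admits a master factorization relation,
which is unique up to swapping its two components. -/
theorem stmt3 (hat : Atomic M) (hlf : LengthFactorial M) (hnf : ¬ Factorial M) :
    ∃ w1 w2 : Multiset (Associates M), IsMasterRel M w1 w2 ∧
      ∀ v1 v2, IsMasterRel M v1 v2 → (v1 = w1 ∧ v2 = w2) ∨ (v1 = w2 ∧ v2 = w1) := by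
  classical
  -- Step 1: produce an irredundant unbalanced relation
  obtain ⟨x, hx⟩ := not_forall.1 hnf
  have hxu : ¬ IsUnit x := by
    intro hu
    apply hx
    refine ⟨0, ⟨by simp, by simp [Associates.mk_eq_one.2 hu]⟩, ?_⟩
    intro y hy
    exact eq_zero_of_prod_eq_one hy.1 (by rw [hy.2, Associates.mk_eq_one.2 hu])
  obtain ⟨s, hs⟩ := hat x hxu
  obtain ⟨t, ht, hts⟩ : ∃ t ∈ FactorsOf M x, t ≠ s := by
    by_contra hcon
    push_neg at hcon
    exact hx ⟨s, hs, fun y hy => hcon y hy⟩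
  have hrel : IsRel M t s := ⟨ht.1, hs.1, by rw [ht.2, hs.2]⟩
  obtain ⟨hrel', hirr'⟩ := reduce hrel
  have hne : t - t ∩ s ≠ s - t ∩ s := by
    intro hEq
    apply hts
    have e1 : t - t ∩ s + t ∩ s = t := tsub_add_cancel_of_le inter_le_left
    have e2 : s - t ∩ s + t ∩ s = s := tsub_add_cancel_of_le inter_le_right
    calc t = t - t ∩ s + t ∩ s := e1.symm
    _ = s - t ∩ s + t ∩ s := by rw [hEq]
    _ = s := e2
  have hcd : card (t - t ∩ s) ≠ card (s - t ∩ s) :=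
    fun h => hne (lf' hlf hrel'.1 hrel'.2.1 hrel'.2.2 h)
  -- Step 2: the set of length-differences of irredundant unbalanced relations
  set S : Set ℕ :=
    {d | 0 < d ∧ ∃ u1 u2, IsRel M u1 u2 ∧ Irredundant M u1 u2 ∧ card u1 + d = card u2}
    with hSdef
  have hSne : S.Nonempty := by
    rcases Nat.lt_or_ge (card (t - t ∩ s)) (card (s - t ∩ s)) with hlt | hge
    · exact ⟨card (s - t ∩ s) - card (t - t ∩ s), by omega, _, _, hrel', hirr', by omega⟩
    · have hlt : card (s - t ∩ s) < card (t - t ∩ s) := by omega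
      exact ⟨card (t - t ∩ s) - card (s - t ∩ s), by omega, _, _,
        isRel_symm hrel', irred_symm hirr', by omega⟩
  have hmem := Nat.sInf_mem hSne
  set d0 := sInf S with hd0def
  rw [hSdef] at hmem
  obtain ⟨hd0pos, w1, w2, hw, hwi, hwc⟩ := hmem
  have hwcne : card w1 ≠ card w2 := by omega
  -- Step 3: d0 divides every difference in S
  have hdvd : ∀ d, d ∈ S → d0 ∣ d := by
    intro d hd
    rw [hSdef] at hd
    obtain ⟨hdpos, z1, z2, hz, hzi, hzc⟩ := hd
    by_contra hnd
    set k := d / d0 + 1 with hkdef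
    have hk1 : d < k * d0 := (Nat.div_lt_iff_lt_mul hd0pos).1 (Nat.lt_succ_self _)
    have hk2 : k * d0 < d + d0 := by
      have h1 : d / d0 * d0 ≤ d := Nat.div_mul_le_self d d0
      have h2 : d / d0 * d0 ≠ d := fun hEq => hnd (Dvd.intro_left _ hEq)
      have h3 : k * d0 = d / d0 * d0 + d0 := Nat.succ_mul _ _
      omega
    have hk0 : k ≠ 0 := Nat.succ_ne_zero _
    have hXrel : IsRel M (z1 + k • w2) (z2 + k • w1) := by
      refine ⟨?_, ?_, ?_⟩
      · intro a ha
        rcases mem_add.1 ha with h | h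
        · exact hz.1 a h
        · exact hw.2.1 a ((mem_nsmul.1 h).2)
      · intro a ha
        rcases mem_add.1 ha with h | h
        · exact hz.2.1 a h
        · exact hw.1 a ((mem_nsmul.1 h).2)
      · rw [prod_add, prod_add, prod_nsmul, prod_nsmul, hz.2.2, hw.2.2]
    obtain ⟨hr, hri⟩ := reduce hXrel
    set X := z1 + k • w2 with hXdef
    set Y := z2 + k • w1 with hYdef
    set c := X ∩ Y with hcdef
    have hcX : card c ≤ card X := card_le_card inter_le_left
    have hcY : card c ≤ card Y := card_le_card inter_le_right
    have hcardX : card X = card z1 + k * card w2 := by rw [hXdef, card_add, card_nsmul]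
    have hcardY : card Y = card z2 + k * card w1 := by rw [hYdef, card_add, card_nsmul]
    have hkmul : k * card w2 = k * card w1 + k * d0 := by rw [← hwc, Nat.mul_add]
    have hsub1 : card (X - c) = card X - card c := card_sub inter_le_left
    have hsub2 : card (Y - c) = card Y - card c := card_sub inter_le_right
    have hd'S : (k * d0 - d) ∈ S := by
      rw [hSdef]
      exact ⟨by omega, Y - c, X - c, isRel_symm hr, irred_symm hri, by omega⟩
    have hle := Nat.sInf_le hd'S
    omega
  -- Step 4: the master property
  have hmain : ∀ z1 z2, IsRel M z1 z2 → Irredundant M z1 z2 → card z1 < card z2 →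
      ∃ n : ℕ, 0 < n ∧ z1 = n • w1 ∧ z2 = n • w2 := by
    intro z1 z2 hz hzi hlt
    have hdS : (card z2 - card z1) ∈ S := by
      rw [hSdef]
      exact ⟨by omega, z1, z2, hz, hzi, by omega⟩
    obtain ⟨n, hn⟩ := hdvd _ hdS
    have hn0 : 0 < n := by
      rcases Nat.eq_zero_or_pos n with rfl | h
      · rw [Nat.mul_zero] at hn; omega
      · exact h
    have hn' : card z2 - card z1 = n * d0 := by rw [hn, Nat.mul_comm]
    obtain ⟨h1, h2⟩ :=
      key hlf (card z2 - card z1) d0 hz hw hzi hwi (by omega) hwc (by omega) hd0pos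
    refine ⟨n, hn0, nsmul_cancel hd0pos ?_, nsmul_cancel hd0pos ?_⟩
    · rw [h1, hn']; exact mul_nsmul w1 n d0
    · rw [h2, hn']; exact mul_nsmul w2 n d0
  have hmaster : ∀ z1 z2, IsRel M z1 z2 → Irredundant M z1 z2 → card z1 ≠ card z2 →
      ∃ n : ℕ, 0 < n ∧ ((z1 = n • w1 ∧ z2 = n • w2) ∨ (z1 = n • w2 ∧ z2 = n • w1)) := by
    intro z1 z2 hz hzi hc
    rcases hc.lt_or_gt with h | h
    · obtain ⟨n, hn0, ha, hb⟩ := hmain z1 z2 hz hzi h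
      exact ⟨n, hn0, Or.inl ⟨ha, hb⟩⟩
    · obtain ⟨n, hn0, ha, hb⟩ := hmain z2 z1 (isRel_symm hz) (irred_symm hzi) h
      exact ⟨n, hn0, Or.inr ⟨hb, ha⟩⟩
  refine ⟨w1, w2, ⟨hw, hwi, hwcne, hmaster⟩, ?_⟩
  -- Step 5: uniqueness up to swap
  intro v1 v2 hv
  obtain ⟨n, hn0, hn⟩ := hmaster v1 v2 hv.1 hv.2.1 hv.2.2.1
  obtain ⟨m, hm0, hm⟩ := hv.2.2.2 w1 w2 hw hwi hwcne
  have hA : 0 < card w1 := card_pos.2 (rel_sides_ne hw hwcne).1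
  rcases hn with ⟨hn1, hn2⟩ | ⟨hn1, hn2⟩ <;> rcases hm with ⟨hm1, hm2⟩ | ⟨hm1, hm2⟩
  · -- v = n•w, w = m•v
    have e1 : card w1 = m * card v1 := by rw [hm1, card_nsmul]
    have e2 : card v1 = n * card w1 := by rw [hn1, card_nsmul]
    have e3 : (m * n) * card w1 = 1 * card w1 := by
      rw [one_mul, Nat.mul_assoc, ← e2, ← e1]
    have e4 : m * n = 1 := Nat.eq_of_mul_eq_mul_right hA e3
    have e5 : n = 1 := Nat.eq_one_of_mul_eq_one_left e4
    subst e5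
    exact Or.inl ⟨by rw [hn1, one_nsmul], by rw [hn2, one_nsmul]⟩
  · -- v = n•w straight, w = m•(swap v) : contradiction
    have e1 : card w1 = m * (n * card w2) := by rw [hm1, hn2, card_nsmul, card_nsmul]
    have e2 : card w2 = m * (n * card w1) := by rw [hm2, hn1, card_nsmul, card_nsmul]
    have e3 := e1
    rw [e2] at e3
    have e4 : ((m * n) * (m * n)) * card w1 = 1 * card w1 := by
      rw [one_mul]
      calc ((m * n) * (m * n)) * card w1 = m * (n * (m * (n * card w1))) := by ring
      _ = card w1 := e3.symm
    have e5 : (m * n) * (m * n) = 1 := Nat.eq_of_mul_eq_mul_right hA e4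
    have e6 : m * n = 1 := Nat.eq_one_of_mul_eq_one_right e5
    have e7 : card w1 = card w2 := by rw [e1, ← Nat.mul_assoc, e6, one_mul]
    exact absurd e7 hwcne
  · -- v = n•(swap w), w = m•v : contradiction
    have e1 : card w1 = m * (n * card w2) := by rw [hm1, hn1, card_nsmul, card_nsmul]
    have e2 : card w2 = m * (n * card w1) := by rw [hm2, hn2, card_nsmul, card_nsmul]
    have e3 := e1
    rw [e2] at e3
    have e4 : ((m * n) * (m * n)) * card w1 = 1 * card w1 := by
      rw [one_mul]
      calc ((m * n) * (m * n)) * card w1 = m * (n * (m * (n * card w1))) := by ring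
      _ = card w1 := e3.symm
    have e5 : (m * n) * (m * n) = 1 := Nat.eq_of_mul_eq_mul_right hA e4
    have e6 : m * n = 1 := Nat.eq_one_of_mul_eq_one_right e5
    have e7 : card w1 = card w2 := by rw [e1, ← Nat.mul_assoc, e6, one_mul]
    exact absurd e7 hwcne
  · -- v = n•(swap w), w = m•(swap v)
    have e1 : card w1 = m * card v2 := by rw [hm1, card_nsmul]
    have e2 : card v2 = n * card w1 := by rw [hn2, card_nsmul]
    have e3 : (m * n) * card w1 = 1 * card w1 := by
      rw [one_mul, Nat.mul_assoc, ← e2, ← e1]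
    have e4 : m * n = 1 := Nat.eq_of_mul_eq_mul_right hA e3
    have e5 : n = 1 := Nat.eq_one_of_mul_eq_one_left e4
    subst e5
    exact Or.inr ⟨by rw [hn1, one_nsmul], by rw [hn2, one_nsmul]⟩

end LF
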